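/- If a nonzero quadratic form Q over F_q has rank r and type (r, e) (e = 0 for odd r; e = ±1 distinguishing the two orbits for even r), then wt(Q) = (r − e + 1)/2. -/

import Mathlib

open Module

section Aux

variable {F : Type*} [Field F] {V : Type*} [AddCommGroup V] [Module F V]
  [FiniteDimensional F V]

lemma ker_functional_finrank (f : V →ₗ[F] F) :
    finrank F V ≤ finrank F (LinearMap.ker f) + 1 := by
  have h1 := LinearMap.finrank_range_add_finrank_ker f
  have h2 : finrank F (LinearMap.range f) ≤ 1 := by
    simpa using Submodule.finrank_le (LinearMap.range f)
  omega

lemma finrank_inf_lb (A B : Submodule F V) :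
    finrank F A + finrank F B ≤ finrank F (A ⊓ B : Submodule F V) + finrank F V := by
  have h := Submodule.finrank_sup_add_finrank_inf_eq A B
  have h2 : finrank F (A ⊔ B : Submodule F V) ≤ finrank F V := Submodule.finrank_le _
  omega

lemma finrank_iInf_ker (k : ℕ) (g : Fin k → (V →ₗ[F] F)) :
    finrank F V ≤ finrank F (⨅ i, LinearMap.ker (g i) : Submodule F V) + k := by
  induction k with
  | zero =>
    have h : (⨅ i, LinearMap.ker (g i) : Submodule F V) = ⊤ := by simp
    rw [h, finrank_top]
    omega
  | succ k ih =>
    have hsplit : (⨅ i, LinearMap.ker (g i) : Submodule F V)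
        = LinearMap.ker (g 0) ⊓ ⨅ i : Fin k, LinearMap.ker (g i.succ) := by
      apply le_antisymm
      · refine le_inf (iInf_le _ 0) (le_iInf fun i => iInf_le _ i.succ)
      · refine le_iInf fun i => ?_
        rcases Fin.eq_zero_or_eq_succ i with h | ⟨j, rfl⟩
        · subst h; exact inf_le_left
        · exact inf_le_right.trans (iInf_le _ j)
    have h1 := ih fun i => g i.succ
    have h2 := finrank_inf_lb (LinearMap.ker (g 0)) (⨅ i : Fin k, LinearMap.ker (g i.succ))
    have h3 := ker_functional_finrank (g 0)
    rw [hsplit]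
    omega

lemma exists_submodule_finrank_le (W : Submodule F V) (k : ℕ) (hk : k ≤ finrank F W) :
    ∃ W' : Submodule F V, W' ≤ W ∧ finrank F W' = k := by
  induction k with
  | zero => exact ⟨⊥, bot_le, finrank_bot F V⟩
  | succ k ih =>
    obtain ⟨W', hW'le, hW'rank⟩ := ih (le_trans (Nat.le_succ k) hk)
    have hne : W' ≠ W := fun h => by rw [h] at hW'rank; omega
    have hlt : W' < W := lt_of_le_of_ne hW'le hne
    obtain ⟨v, hvW, hvW'⟩ := SetLike.exists_of_lt hlt
    refine ⟨W' ⊔ F ∙ v, sup_le hW'le ((Submodule.span_singleton_le_iff_mem v W).mpr hvW), ?_⟩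
    have hlt2 : W' < W' ⊔ F ∙ v := by
      refine lt_of_le_of_ne le_sup_left fun h => hvW' ?_
      rw [h]
      exact Submodule.mem_sup_right (Submodule.mem_span_singleton_self v)
    have hlb := Submodule.finrank_lt_finrank_of_lt hlt2
    have hub : finrank F (W' ⊔ F ∙ v : Submodule F V) ≤ finrank F W' + 1 := by
      have h := Submodule.finrank_sup_add_finrank_inf_eq W' (F ∙ v)
      have h2 : finrank F (F ∙ v : Submodule F V) ≤ 1 := by
        simpa using finrank_span_le_card ({v} : Set V)
      omega
    omega

end Aux

section Decomp

variable {F : Type*} [Field F] {V : Type*} [AddCommGroup V] [Module F V]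
  [FiniteDimensional F V]

/-- If `Q` vanishes on a subspace of codimension at most `k`, it is a sum of `k`
products of linear forms. -/
lemma decomp_of_isotropic (k : ℕ) (Q : QuadraticForm F V) (W : Submodule F V)
    (hiso : ∀ x ∈ W, Q x = 0) (hrk : finrank F V ≤ finrank F W + k) :
    ∃ l l' : Fin k → (V →ₗ[F] F), ∀ x, Q x = ∑ i, l i x * l' i x := by
  induction k generalizing Q W with
  | zero =>
    have hW : W = ⊤ := by
      apply Submodule.eq_top_of_finrank_eq
      have := Submodule.finrank_le W
      omega
    subst hW
    refine ⟨Fin.elim0, Fin.elim0, fun x => ?_⟩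
    simp [hiso x Submodule.mem_top]
  | succ k ih =>
    by_cases hk : finrank F V ≤ finrank F W + k
    · obtain ⟨l, l', h⟩ := ih Q W hiso hk
      refine ⟨Fin.cons 0 l, Fin.cons 0 l', fun x => ?_⟩
      rw [Fin.sum_univ_succ]
      simp [h x]
    · -- W ≠ ⊤; pick v ∉ W and a functional l with l v = 1 vanishing on W
      have hWne : W ≠ ⊤ := by
        intro h
        rw [h, finrank_top] at hk
        omega
      obtain ⟨v, hv⟩ : ∃ v, v ∉ W := by
        by_contra h
        push_neg at h
        exact hWne (by ext x; simp [h x])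
      obtain ⟨f, hfv, hfW⟩ := Submodule.exists_dual_map_eq_bot_of_notMem hv inferInstance
      set l : V →ₗ[F] F := (f v)⁻¹ • f with hl
      have hlv : l v = 1 := by simp [hl, inv_mul_cancel₀ hfv]
      have hlW : ∀ w ∈ W, l w = 0 := by
        intro w hw
        have : f w ∈ W.map f := Submodule.mem_map_of_mem hw
        rw [hfW] at this
        simp only [Submodule.mem_bot] at this
        simp [hl, this]
      set m : V →ₗ[F] F := (QuadraticMap.polarBilin Q).flip v
          + (Q v - QuadraticMap.polar Q v v) • l with hm
      have hmx : ∀ x, m x = QuadraticMap.polar Q x v + (Q v - QuadraticMap.polar Q v v) * l x := by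
        intro x; simp [hm]
      set Q' : QuadraticForm F V := Q - QuadraticMap.linMulLin l m with hQ'
      have hQ'x : ∀ x, Q' x = Q x - l x * m x := by
        intro x; simp [hQ']
      set W' : Submodule F V := W ⊔ F ∙ v with hW'
      have hisoW' : ∀ x ∈ W', Q' x = 0 := by
        intro x hx
        rw [hW', Submodule.mem_sup] at hx
        obtain ⟨w, hw, z, hz, rfl⟩ := hx
        obtain ⟨t, rfl⟩ := Submodule.mem_span_singleton.mp hz
        have e1 : Q (w + t • v) = Q w + (t * t) • Q v + t • QuadraticMap.polar Q w v := by
          rw [QuadraticMap.map_add Q w (t • v), QuadraticMap.map_smul,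
            QuadraticMap.polar_smul_right]
        rw [hQ'x, e1, hmx]
        have e2 : l (w + t • v) = t := by
          simp [map_add, map_smul, hlv, hlW w hw]
        have e3 : QuadraticMap.polar Q (w + t • v) v
            = QuadraticMap.polar Q w v + t * QuadraticMap.polar Q v v := by
          rw [QuadraticMap.polar_add_left, QuadraticMap.polar_smul_left]
          simp [smul_eq_mul]
        rw [e2, e3, hiso w hw]
        simp only [smul_eq_mul]
        ring
      have hrkW' : finrank F V ≤ finrank F W' + k := by
        have hlt : W < W' := by
          refine lt_of_le_of_ne le_sup_left fun h => hv ?_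
          rw [h]
          exact Submodule.mem_sup_right (Submodule.mem_span_singleton_self v)
        have := Submodule.finrank_lt_finrank_of_lt hlt
        omega
      obtain ⟨l₂, l₂', h₂⟩ := ih Q' W' hisoW' hrkW'
      refine ⟨Fin.cons l l₂, Fin.cons m l₂', fun x => ?_⟩
      rw [Fin.sum_univ_succ]
      simp only [Fin.cons_zero, Fin.cons_succ]
      have := h₂ x
      rw [hQ'x] at this
      linear_combination this

end Decomp

section Chev

variable {F : Type*} [Field F] {V : Type*} [AddCommGroup V] [Module F V]

open MvPolynomial in
lemma exists_poly_of_quadratic (Q : QuadraticForm F V) :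
    ∀ (k : ℕ) (b : Fin k → V), ∃ f : MvPolynomial (Fin k) F, f.totalDegree ≤ 2 ∧
      ∀ c : Fin k → F, MvPolynomial.eval c f = Q (∑ i, c i • b i) := by
  intro k
  induction k with
  | zero =>
    intro b
    exact ⟨0, by simp, fun c => by simp⟩
  | succ k ih =>
    intro b
    obtain ⟨g, hgdeg, hgev⟩ := ih fun i => b i.succ
    refine ⟨C (Q (b 0)) * (X 0 * X 0)
        + X 0 * (∑ i : Fin k, C (QuadraticMap.polar Q (b 0) (b i.succ)) * X i.succ)
        + rename Fin.succ g, ?_, ?_⟩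
    · apply le_trans (totalDegree_add _ _)
      apply max_le
      · apply le_trans (totalDegree_add _ _)
        apply max_le
        · apply le_trans (totalDegree_mul _ _)
          have h1 : (C (Q (b 0)) : MvPolynomial (Fin (k+1)) F).totalDegree = 0 :=
            totalDegree_C _
          have h2 : (X 0 * X 0 : MvPolynomial (Fin (k+1)) F).totalDegree ≤ 2 := by
            apply le_trans (totalDegree_mul _ _)
            have := totalDegree_X (R := F) (0 : Fin (k+1))
            omega
          omega
        · apply le_trans (totalDegree_mul _ _)
          have h1 := totalDegree_X (R := F) (0 : Fin (k+1))
          have h2 : (∑ i : Fin k, C (QuadraticMap.polar Q (b 0) (b i.succ))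
              * (X i.succ : MvPolynomial (Fin (k+1)) F)).totalDegree ≤ 1 := by
            apply le_trans (totalDegree_finset_sum _ _)
            apply Finset.sup_le
            intro i _
            apply le_trans (totalDegree_mul _ _)
            have := totalDegree_X (R := F) (i.succ : Fin (k+1))
            have := totalDegree_C (σ := Fin (k+1)) (QuadraticMap.polar Q (b 0) (b i.succ))
            omega
          omega
      · exact le_trans (totalDegree_rename_le _ _) hgdeg
    · intro c
      have hs : (∑ i, c i • b i) = c 0 • b 0 + ∑ i : Fin k, c i.succ • b i.succ := by
        rw [Fin.sum_univ_succ]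
      rw [hs, QuadraticMap.map_add Q (c 0 • b 0) (∑ i : Fin k, c i.succ • b i.succ),
        QuadraticMap.map_smul]
      have hpol : QuadraticMap.polar Q (c 0 • b 0) (∑ i : Fin k, c i.succ • b i.succ)
          = c 0 * ∑ i : Fin k, c i.succ * QuadraticMap.polar Q (b 0) (b i.succ) := by
        rw [QuadraticMap.polar_smul_left]
        have hsum : QuadraticMap.polar Q (b 0) (∑ i : Fin k, c i.succ • b i.succ)
            = ∑ i : Fin k, c i.succ * QuadraticMap.polar Q (b 0) (b i.succ) := by
          simp [← QuadraticMap.polarBilin_apply_apply, map_sum, smul_eq_mul]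
        rw [hsum, smul_eq_mul, Finset.mul_sum]
      simp only [map_add, map_mul, eval_C, eval_X, eval_rename, map_sum]
      have hg2 : (MvPolynomial.eval (c ∘ Fin.succ)) g
          = Q (∑ i : Fin k, c i.succ • b i.succ) := hgev (c ∘ Fin.succ)
      have hcomm : (∑ x : Fin k, QuadraticMap.polar Q (b 0) (b x.succ) * c x.succ)
          = ∑ x : Fin k, c x.succ * QuadraticMap.polar Q (b 0) (b x.succ) :=
        Finset.sum_congr rfl fun i _ => mul_comm _ _
      rw [hg2, hpol]
      simp only [smul_eq_mul]
      ring_nf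
      rw [hcomm]

lemma exists_isotropic_vector [Fintype F] [FiniteDimensional F V] (Q : QuadraticForm F V)
    (C : Submodule F V) (hC : 3 ≤ finrank F C) :
    ∃ v ∈ C, v ≠ 0 ∧ Q v = 0 := by
  classical
  set k := finrank F C with hk
  let b0 := finBasis F C
  let b : Fin k → V := fun i => (b0 i : V)
  have hli : LinearIndependent F b := b0.linearIndependent.map' C.subtype C.ker_subtype
  obtain ⟨f, hdeg, hev⟩ := exists_poly_of_quadratic Q k b
  have hcard : f.totalDegree < Fintype.card (Fin k) := by
    rw [Fintype.card_fin]; omega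
  haveI := ringChar.charP F
  have hch := char_dvd_card_solutions (K := F) (σ := Fin k) (ringChar F) hcard
  have hp : (ringChar F).Prime := CharP.char_is_prime F (ringChar F)
  have h0 : MvPolynomial.eval (0 : Fin k → F) f = 0 := by
    rw [hev 0]
    simp
  have hpos : 0 < Fintype.card {x // MvPolynomial.eval x f = 0} :=
    Fintype.card_pos_iff.mpr ⟨⟨0, h0⟩⟩
  have hdvd : ringChar F ∣ Fintype.card {x // MvPolynomial.eval x f = 0} := hch
  have hlt : 1 < Fintype.card {x // MvPolynomial.eval x f = 0} := by
    have hp2 : 2 ≤ ringChar F := hp.two_le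
    have := Nat.le_of_dvd hpos hdvd
    omega
  obtain ⟨⟨c, hc⟩, hne⟩ := Fintype.exists_ne_of_one_lt_card hlt ⟨0, h0⟩
  refine ⟨∑ i, c i • b i, ?_, ?_, ?_⟩
  · exact Submodule.sum_mem _ fun i _ => Submodule.smul_mem _ _ (b0 i).2
  · intro hv0
    have : ∀ i, c i = 0 := Fintype.linearIndependent_iff.mp hli c hv0
    exact hne (Subtype.ext (funext this))
  · rw [← hev c]
    exact hc

end Chev

section IsoExists

variable {F : Type u_f} [Field F] [Fintype F]

lemma iso_exists (m : ℕ) :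
    ∀ {V : Type u_v} [AddCommGroup V] [Module F V] [FiniteDimensional F V]
      (Q : QuadraticForm F V) (RQ : Submodule F V),
      (∀ x ∈ RQ, Q x = 0 ∧ ∀ y, QuadraticMap.polar Q x y = 0) →
      finrank F V ≤ finrank F RQ + m →
      ∃ W : Submodule F V, (∀ x ∈ W, Q x = 0) ∧
        finrank F RQ + (finrank F V - finrank F RQ - 1) / 2 ≤ finrank F W := by
  induction m using Nat.strong_induction_on with
  | _ m ih =>
  intro V _ _ _ Q RQ hRQ hm
  by_cases hd : finrank F V ≤ finrank F RQ + 2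
  · exact ⟨RQ, fun x hx => (hRQ x hx).1, by omega⟩
  · push_neg at hd
    obtain ⟨C, hC⟩ := Submodule.exists_isCompl RQ
    have hCrank : finrank F RQ + finrank F C = finrank F V :=
      Submodule.finrank_add_eq_of_isCompl hC
    have hC3 : 3 ≤ finrank F C := by omega
    obtain ⟨v, hvC, hv0, hQv⟩ := exists_isotropic_vector Q C hC3
    have hvR : v ∉ RQ := by
      intro hvR
      apply hv0
      have hvi : v ∈ RQ ⊓ C := ⟨hvR, hvC⟩
      rwa [hC.inf_eq_bot, Submodule.mem_bot] at hvi
    by_cases hrad : ∀ y, QuadraticMap.polar Q v y = 0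
    · -- the isotropic vector is in the radical: enlarge `RQ`
      set RQ' : Submodule F V := RQ ⊔ F ∙ v with hRQ'def
      have hRQ'mem : ∀ x ∈ RQ', Q x = 0 ∧ ∀ y, QuadraticMap.polar Q x y = 0 := by
        intro x hx
        rw [hRQ'def, Submodule.mem_sup] at hx
        obtain ⟨ρ, hρ, z, hz, rfl⟩ := hx
        obtain ⟨t, rfl⟩ := Submodule.mem_span_singleton.mp hz
        constructor
        · rw [QuadraticMap.map_add Q ρ (t • v), QuadraticMap.map_smul, (hRQ ρ hρ).1, hQv,
            QuadraticMap.polar_smul_right, QuadraticMap.polar_comm, hrad ρ]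
          simp
        · intro y
          rw [QuadraticMap.polar_add_left, QuadraticMap.polar_smul_left, (hRQ ρ hρ).2 y,
            hrad y]
          simp
      have hlt : RQ < RQ' := by
        refine lt_of_le_of_ne le_sup_left fun h => hvR ?_
        rw [h]
        exact Submodule.mem_sup_right (Submodule.mem_span_singleton_self v)
      have hrk' := Submodule.finrank_lt_finrank_of_lt hlt
      have hm' : finrank F V ≤ finrank F RQ' + (m - 1) := by omega
      obtain ⟨W, hWiso, hWrank⟩ := ih (m - 1) (by omega) Q RQ' hRQ'mem hm'
      exact ⟨W, hWiso, by omega⟩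
    · -- hyperbolic splitting
      push_neg at hrad
      obtain ⟨u, hu⟩ := hrad
      set fv : V →ₗ[F] F := QuadraticMap.polarBilin Q v with hfv
      set fu : V →ₗ[F] F := QuadraticMap.polarBilin Q u with hfu
      set P : Submodule F V := LinearMap.ker fv ⊓ LinearMap.ker fu with hP
      have hfvv : fv v = 0 := by
        simp [hfv, QuadraticMap.polar_self, hQv]
      have hfuv : fu v ≠ 0 := by
        have : fu v = QuadraticMap.polar Q v u := QuadraticMap.polar_comm _ _ _
        rw [this]
        exact hu
      have hRP : RQ ≤ P := by
        intro ρ hρ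
        refine ⟨LinearMap.mem_ker.mpr ?_, LinearMap.mem_ker.mpr ?_⟩
        · rw [hfv]
          simpa [QuadraticMap.polar_comm] using (hRQ ρ hρ).2 v
        · rw [hfu]
          simpa [QuadraticMap.polar_comm] using (hRQ ρ hρ).2 u
      have hvP : v ∉ P := fun h => hfuv (LinearMap.mem_ker.mp h.2)
      -- upper bound for `finrank P`
      set u' : V := u - (QuadraticMap.polar Q u u / QuadraticMap.polar Q u v) • v with hu'
      have hpuv : QuadraticMap.polar Q u v ≠ 0 := by
        rw [QuadraticMap.polar_comm]; exact hu
      have hfu'u : fu u' = 0 := by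
        rw [hu']
        simp only [map_sub, map_smul, hfu, QuadraticMap.polarBilin_apply_apply, smul_eq_mul]
        field_simp
        simp
      have hfv'u : fv u' ≠ 0 := by
        rw [hu']
        simp only [map_sub, map_smul, hfv, QuadraticMap.polarBilin_apply_apply, smul_eq_mul]
        have : QuadraticMap.polar Q v v = 0 := by
          simpa [QuadraticMap.polar_self, hQv] using hfvv
        rw [this]
        simpa [QuadraticMap.polar_comm] using hu
      have hPltker : P < LinearMap.ker fu := by
        refine lt_of_le_of_ne inf_le_right fun h => ?_
        have : u' ∈ P := h ▸ LinearMap.mem_ker.mpr hfu'u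
        exact hfv'u (LinearMap.mem_ker.mp this.1)
      have hkerlt : LinearMap.ker fu < ⊤ := by
        refine lt_of_le_of_ne le_top fun h => hfuv ?_
        have : v ∈ LinearMap.ker fu := h ▸ Submodule.mem_top
        exact LinearMap.mem_ker.mp this
      have hub : finrank F P + 2 ≤ finrank F V := by
        have h1 := Submodule.finrank_lt_finrank_of_lt hPltker
        have h2 := Submodule.finrank_lt_finrank_of_lt hkerlt
        rw [finrank_top] at h2
        omega
      have hlb : finrank F V ≤ finrank F P + 2 := by
        have h1 := finrank_inf_lb (LinearMap.ker fv) (LinearMap.ker fu)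
        have h2 := ker_functional_finrank fv
        have h3 := ker_functional_finrank fu
        rw [← hP] at h1
        omega
      set QP : QuadraticForm F P := Q.comp P.subtype with hQP
      have hQPapply : ∀ x : P, QP x = Q (x : V) := fun x => rfl
      have hQPpolar : ∀ x y : P,
          QuadraticMap.polar QP x y = QuadraticMap.polar Q (x : V) (y : V) := by
        intro x y
        simp [QuadraticMap.polar, hQPapply]
      set RQ'' : Submodule F P := Submodule.comap P.subtype RQ with hRQ''
      have hs'' : finrank F RQ'' = finrank F RQ :=
        (Submodule.comapSubtypeEquivOfLe hRP).finrank_eq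
      have hRQ''mem : ∀ x ∈ RQ'', QP x = 0 ∧ ∀ y, QuadraticMap.polar QP x y = 0 := by
        intro x hx
        have hxR : (x : V) ∈ RQ := hx
        exact ⟨(hRQ _ hxR).1, fun y => by rw [hQPpolar]; exact (hRQ _ hxR).2 y⟩
      have hm'' : finrank F P ≤ finrank F RQ'' + (m - 1) := by omega
      obtain ⟨W', hW'iso, hW'rank⟩ := ih (m - 1) (by omega) QP RQ'' hRQ''mem hm''
      set W : Submodule F V := Submodule.map P.subtype W' ⊔ F ∙ v with hW
      have hmaple : Submodule.map P.subtype W' ≤ P := Submodule.map_subtype_le P W'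
      have hWiso : ∀ x ∈ W, Q x = 0 := by
        intro x hx
        rw [hW, Submodule.mem_sup] at hx
        obtain ⟨w, hw, z, hz, rfl⟩ := hx
        obtain ⟨t, rfl⟩ := Submodule.mem_span_singleton.mp hz
        obtain ⟨w', hw', rfl⟩ := Submodule.mem_map.mp hw
        have h1 : Q (P.subtype w') = 0 := hW'iso w' hw'
        have h2 : QuadraticMap.polar Q (P.subtype w') v = 0 := by
          rw [QuadraticMap.polar_comm]
          exact LinearMap.mem_ker.mp (w'.2.1)
        rw [QuadraticMap.map_add Q (P.subtype w') (t • v), QuadraticMap.map_smul,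
          QuadraticMap.polar_smul_right, h1, hQv, h2]
        simp
      have hmaprank : finrank F (Submodule.map P.subtype W') = finrank F W' :=
        Submodule.finrank_map_subtype_eq P W'
      have hltW : Submodule.map P.subtype W' < W := by
        refine lt_of_le_of_ne le_sup_left fun h => hvP ?_
        apply hmaple
        rw [h]
        exact Submodule.mem_sup_right (Submodule.mem_span_singleton_self v)
      have hWrank := Submodule.finrank_lt_finrank_of_lt hltW
      refine ⟨W, hWiso, ?_⟩
      omega

end IsoExists

section Main

variable {F : Type*} [Field F]

lemma sum_products_radical {n : ℕ} (Q : QuadraticForm F (Fin n → F)) {k : ℕ}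
    {l l' : Fin k → ((Fin n → F) →ₗ[F] F)} (hsum : ∀ x, Q x = ∑ i, l i x * l' i x)
    (x : Fin n → F) (hx1 : ∀ i, l i x = 0) (hx2 : ∀ i, l' i x = 0) :
    Q x = 0 ∧ ∀ y, QuadraticMap.polar Q x y = 0 := by
  constructor
  · rw [hsum x]
    apply Finset.sum_eq_zero
    intro i _
    rw [hx1 i, zero_mul]
  · intro y
    simp [QuadraticMap.polar, hsum, map_add, hx1, hx2]

end Main

/-- The weight of a quadratic form: the least `k` such that it is (pointwise) a sum of
`k` products of two linear forms. -/
noncomputable def qwt {F : Type*} [Field F] {n : ℕ}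
    (Q : QuadraticForm F (Fin n → F)) : ℕ :=
  sInf {k | ∃ l l' : Fin k → ((Fin n → F) →ₗ[F] F), ∀ x, Q x = ∑ i, l i x * l' i x}


theorem stmt17 {F : Type*} [Field F] [Fintype F] (n : ℕ)
    (Q : QuadraticForm F (Fin n → F)) (hQ : Q ≠ 0)
    (r : ℕ) (hr : r ≤ n)
    (R : Submodule F (Fin n → F))
    (hR : ∀ x, x ∈ R ↔ (Q x = 0 ∧ ∀ y, QuadraticMap.polar Q x y = 0))
    (hrank : finrank F ↥R = n - r)
    (e : ℤ)
    (he : (Odd r ∧ e = 0) ∨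
      (Even r ∧ (e = 1 ∨ e = -1) ∧
        (e = 1 ↔ ∃ W : Submodule F (Fin n → F),
          finrank F ↥W = n - r / 2 ∧ ∀ x ∈ W, Q x = 0))) :
    2 * (qwt Q : ℤ) = (r : ℤ) - e + 1 := by
  classical
  have hn : finrank F (Fin n → F) = n := Module.finrank_fin_fun F
  set S := {k | ∃ l l' : Fin k → ((Fin n → F) →ₗ[F] F), ∀ x, Q x = ∑ i, l i x * l' i x}
    with hSdef
  have hqwtS : qwt Q = sInf S := rfl
  -- r is positive
  have hr0 : r ≠ 0 := by
    intro h
    subst h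
    have hRtop : R = ⊤ := Submodule.eq_top_of_finrank_eq (by rw [hrank, Nat.sub_zero, hn])
    refine hQ (QuadraticMap.ext fun x => ?_)
    have := ((hR x).mp (hRtop ▸ Submodule.mem_top)).1
    simpa using this
  -- lower bound facts for members of S
  have hlow : ∀ k ∈ S, r ≤ 2 * k := by
    intro k hk
    obtain ⟨l, l', hsum⟩ := hk
    set K : Submodule F (Fin n → F) :=
      (⨅ i, LinearMap.ker (l i)) ⊓ ⨅ i, LinearMap.ker (l' i) with hK
    have hKR : K ≤ R := by
      intro x hx
      have hx1 : ∀ i, l i x = 0 := fun i =>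
        LinearMap.mem_ker.mp ((Submodule.mem_iInf _).mp hx.1 i)
      have hx2 : ∀ i, l' i x = 0 := fun i =>
        LinearMap.mem_ker.mp ((Submodule.mem_iInf _).mp hx.2 i)
      exact (hR x).mpr (sum_products_radical Q hsum x hx1 hx2)
    have h1 := finrank_iInf_ker k l
    have h2 := finrank_iInf_ker k l'
    have h3 := finrank_inf_lb (⨅ i, LinearMap.ker (l i)) (⨅ i, LinearMap.ker (l' i))
    have h4 : finrank F K ≤ finrank F R := Submodule.finrank_mono hKR
    rw [hn] at h1 h2 h3
    rw [← hK] at h3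
    omega
  have hlowW : ∀ k ∈ S, ∃ W : Submodule F (Fin n → F),
      (∀ x ∈ W, Q x = 0) ∧ n ≤ finrank F W + k := by
    intro k hk
    obtain ⟨l, l', hsum⟩ := hk
    refine ⟨⨅ i, LinearMap.ker (l i), ?_, ?_⟩
    · intro x hx
      rw [hsum x]
      apply Finset.sum_eq_zero
      intro i _
      rw [LinearMap.mem_ker.mp ((Submodule.mem_iInf _).mp hx i), zero_mul]
    · have h1 := finrank_iInf_ker k l
      rw [hn] at h1
      omega
  -- membership from isotropic subspaces
  have hup : ∀ (k : ℕ) (W : Submodule F (Fin n → F)),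
      (∀ x ∈ W, Q x = 0) → n ≤ finrank F W + k → k ∈ S := by
    intro k W hiso hrk
    obtain ⟨l, l', h⟩ := decomp_of_isotropic k Q W hiso (by rw [hn]; omega)
    exact ⟨l, l', h⟩
  -- the universal isotropic subspace
  have hRmem : ∀ x ∈ R, Q x = 0 ∧ ∀ y, QuadraticMap.polar Q x y = 0 := fun x hx => (hR x).mp hx
  obtain ⟨W0, hW0iso, hW0rank⟩ := iso_exists n Q R hRmem (by rw [hn]; omega)
  rw [hrank, hn] at hW0rank
  rcases he with ⟨hodd, rfl⟩ | ⟨heven, hpm, hiff⟩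
  · -- odd rank
    obtain ⟨t, ht⟩ := hodd
    have hk0 : (r + 1) / 2 ∈ S := by
      apply hup _ W0 hW0iso
      omega
    have hmin : ∀ k ∈ S, (r + 1) / 2 ≤ k := by
      intro k hk
      have := hlow k hk
      omega
    have hq : qwt Q = (r + 1) / 2 :=
      le_antisymm (hqwtS ▸ Nat.sInf_le hk0) (hqwtS ▸ le_csInf ⟨_, hk0⟩ hmin)
    rw [hq]
    have : ((r + 1) / 2 : ℕ) = t + 1 := by omega
    rw [this]
    push_cast
    omega
  · obtain ⟨t, ht⟩ := heven
    rcases hpm with rfl | rfl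
    · -- hyperbolic
      obtain ⟨W, hWrank, hWiso⟩ := hiff.mp rfl
      have hk0 : r / 2 ∈ S := by
        apply hup _ W hWiso
        omega
      have hmin : ∀ k ∈ S, r / 2 ≤ k := by
        intro k hk
        have := hlow k hk
        omega
      have hq : qwt Q = r / 2 :=
        le_antisymm (hqwtS ▸ Nat.sInf_le hk0) (hqwtS ▸ le_csInf ⟨_, hk0⟩ hmin)
      rw [hq]
      have : (r / 2 : ℕ) = t := by omega
      rw [this]
      push_cast
      omega
    · -- elliptic
      have hk0 : r / 2 + 1 ∈ S := by
        apply hup _ W0 hW0iso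
        omega
      have hmin : ∀ k ∈ S, r / 2 + 1 ≤ k := by
        intro k hk
        by_contra hc
        push_neg at hc
        obtain ⟨W1, hW1iso, hW1rank⟩ := hlowW k hk
        obtain ⟨W', hW'le, hW'rank⟩ := exists_submodule_finrank_le W1 (n - r / 2) (by omega)
        have he1 : (-1 : ℤ) = 1 := hiff.mpr ⟨W', hW'rank, fun x hx => hW1iso x (hW'le hx)⟩
        norm_num at he1
      have hq : qwt Q = r / 2 + 1 :=
        le_antisymm (hqwtS ▸ Nat.sInf_le hk0) (hqwtS ▸ le_csInf ⟨_, hk0⟩ hmin)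
      rw [hq]
      have : (r / 2 : ℕ) = t := by omega
      rw [this]
      push_cast
      omega
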